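/- Let f be the global pdf of a random persistence diagram D with |D| ≤ M a.s., such that each local density f_N on W^N is bounded by C₂ and satisfies f_N(ξ_1,...,ξ_N) ≤ C₃ ‖(ξ_1,...,ξ_N)‖^{-2N-2}. Then the expected maximal persistence E[max_i (d_i - b_i)] is finite, and consequently for any fixed persistence diagram 𝒟₀, the mean absolute bottleneck deviation MAD_f(𝒟₀) = ∫ W_∞(𝒟₀, Z) f(Z) δZ is finite. -/

import Mathlib

open MeasureTheory
open scoped BigOperators

/-- Sup-norm distance between planar points. -/
noncomputable def supDist (x y : ℝ × ℝ) : ℝ := max |x.1 - y.1| |x.2 - y.2|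

/-- Half the persistence of a feature: its sup-norm distance to the diagonal. -/
noncomputable def persHalf (x : ℝ × ℝ) : ℝ := (x.2 - x.1) / 2

/-- `BottleneckLE D₁ D₂ r`: there is a partial matching between the diagrams `D₁, D₂`
moving each matched pair by at most `r` (sup-norm) and leaving only features within `r`
of the diagonal unmatched. -/
def BottleneckLE (D₁ D₂ : Multiset (ℝ × ℝ)) (r : ℝ) : Prop :=
  ∃ m : Multiset ((ℝ × ℝ) × (ℝ × ℝ)),
    m.map Prod.fst ≤ D₁ ∧ m.map Prod.snd ≤ D₂ ∧
    (∀ p ∈ m, supDist p.1 p.2 ≤ r) ∧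
    (∀ x ∈ D₁ - m.map Prod.fst, persHalf x ≤ r) ∧
    (∀ y ∈ D₂ - m.map Prod.snd, persHalf y ≤ r)

/-- The bottleneck distance between two persistence diagrams (finite multisets in the
plane), where features may be matched to the diagonal. -/
noncomputable def bottleneck (D₁ D₂ : Multiset (ℝ × ℝ)) : ℝ :=
  sInf {r : ℝ | 0 ≤ r ∧ BottleneckLE D₁ D₂ r}

open Real in
lemma aux_lintegral_lt_top (N : ℕ) (C₂ C₃ : ℝ)
    (f : (Fin N → ℝ × ℝ) → ℝ) (h0 : ∀ ξ, 0 ≤ f ξ)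
    (hA2 : ∀ ξ, f ξ ≤ C₂)
    (hA3 : ∀ ξ, ξ ≠ 0 → f ξ ≤ C₃ * ‖ξ‖ ^ (-(2 * (N : ℝ)) - 2))
    (g : (Fin N → ℝ × ℝ) → ℝ) (a b : ℝ) (ha : 0 ≤ a) (hb : 0 ≤ b)
    (hg : ∀ ξ, g ξ ≤ a + b * ‖ξ‖) :
    ∫⁻ ξ : Fin N → ℝ × ℝ, ENNReal.ofReal (g ξ * f ξ) < ⊤ := by
  set r : ℝ := 2 * N + 1 with hr
  set CC : ℝ := max C₂ 0 + max C₃ 0 with hCC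
  have hCC0 : 0 ≤ CC := by positivity
  set K : ℝ := (a + b) * CC * 2 ^ r with hK
  have hK0 : 0 ≤ K := by positivity
  have h2r : (0:ℝ) < 2 ^ r := rpow_pos_of_pos two_pos r
  have hrn : -r ≤ 0 := neg_nonpos.mpr (by positivity)
  have key : ∀ ξ : Fin N → ℝ × ℝ, g ξ * f ξ ≤ K * (1 + ‖ξ‖) ^ (-r) := by
    intro ξ
    have hξ0 : (0:ℝ) ≤ ‖ξ‖ := norm_nonneg _
    have step1 : g ξ * f ξ ≤ (a + b * ‖ξ‖) * f ξ :=
      mul_le_mul_of_nonneg_right (hg ξ) (h0 ξ)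
    rcases le_or_gt ‖ξ‖ 1 with h1 | h1
    · have step2 : (a + b * ‖ξ‖) * f ξ ≤ (a + b) * CC := by
        apply mul_le_mul (by nlinarith) ((hA2 ξ).trans
          (le_add_of_le_of_nonneg (le_max_left _ _) (le_max_right _ _))) (h0 ξ) (by nlinarith)
      have h2 : (2:ℝ) ^ (-r) ≤ (1 + ‖ξ‖) ^ (-r) :=
        rpow_le_rpow_of_nonpos (by linarith) (by linarith) hrn
      have : K * (2:ℝ) ^ (-r) ≤ K * (1 + ‖ξ‖) ^ (-r) :=
        mul_le_mul_of_nonneg_left h2 hK0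
      have hKe : K * (2:ℝ) ^ (-r) = (a + b) * CC := by
        rw [hK, rpow_neg (by norm_num)]
        field_simp
      linarith [step1, step2]
    · have hξpos : (0:ℝ) < ‖ξ‖ := by linarith
      have hne : ξ ≠ 0 := by
        intro h; rw [h] at h1; simp at h1; linarith
      have hfb : f ξ ≤ CC * ‖ξ‖ ^ (-(2 * (N : ℝ)) - 2) := by
        refine (hA3 ξ hne).trans ?_
        exact mul_le_mul_of_nonneg_right
          (le_add_of_nonneg_of_le (le_max_right _ _) (le_max_left _ _))
          (rpow_nonneg hξpos.le _)
      have step2 : (a + b * ‖ξ‖) * f ξ ≤ ((a + b) * ‖ξ‖) * (CC * ‖ξ‖ ^ (-(2 * (N : ℝ)) - 2)) := by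
        apply mul_le_mul (by nlinarith) hfb (h0 ξ) (by positivity)
      have hrw : ((a + b) * ‖ξ‖) * (CC * ‖ξ‖ ^ (-(2 * (N : ℝ)) - 2)) =
          (a + b) * CC * ‖ξ‖ ^ (-r) := by
        rw [show ‖ξ‖ ^ (-r) = ‖ξ‖ ^ ((1:ℝ) + (-(2 * (N : ℝ)) - 2)) by rw [hr]; ring_nf,
          rpow_add hξpos, rpow_one]
        ring
      have hmono : ‖ξ‖ ^ (-r) ≤ 2 ^ r * (1 + ‖ξ‖) ^ (-r) := by
        have heq : ((1 + ‖ξ‖) / 2) ^ (-r) = 2 ^ r * (1 + ‖ξ‖) ^ (-r) := by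
          rw [div_rpow (by linarith) (by norm_num),
            rpow_neg (by norm_num : (0:ℝ) ≤ 2), div_eq_mul_inv, inv_inv, mul_comm]
        rw [← heq]
        exact rpow_le_rpow_of_nonpos (by linarith) (by linarith) hrn
      calc g ξ * f ξ ≤ (a + b) * CC * ‖ξ‖ ^ (-r) := by
            rw [← hrw]; exact step1.trans step2
        _ ≤ (a + b) * CC * (2 ^ r * (1 + ‖ξ‖) ^ (-r)) :=
            mul_le_mul_of_nonneg_left hmono (by positivity)
        _ = K * (1 + ‖ξ‖) ^ (-r) := by rw [hK]; ring
  calc ∫⁻ ξ : Fin N → ℝ × ℝ, ENNReal.ofReal (g ξ * f ξ)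
      ≤ ∫⁻ ξ : Fin N → ℝ × ℝ, ENNReal.ofReal (K * (1 + ‖ξ‖) ^ (-r)) :=
        lintegral_mono fun ξ => ENNReal.ofReal_le_ofReal (key ξ)
    _ = ∫⁻ ξ : Fin N → ℝ × ℝ, ENNReal.ofReal K * ENNReal.ofReal ((1 + ‖ξ‖) ^ (-r)) := by
        simp_rw [← ENNReal.ofReal_mul hK0]
    _ = ENNReal.ofReal K * ∫⁻ ξ : Fin N → ℝ × ℝ, ENNReal.ofReal ((1 + ‖ξ‖) ^ (-r)) :=
        lintegral_const_mul' _ _ ENNReal.ofReal_ne_top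
    _ < ⊤ := by
        apply ENNReal.mul_lt_top ENNReal.ofReal_lt_top
        apply finite_integral_one_add_norm
        rw [show (Module.finrank ℝ (Fin N → ℝ × ℝ) : ℝ) = 2 * N by
          simp [Module.finrank_pi_fintype, Module.finrank_prod]; ring]
        rw [hr]; linarith

open Real in
lemma pers_le_norm {N : ℕ} (ξ : Fin N → ℝ × ℝ) (i : Fin N) :
    (ξ i).2 - (ξ i).1 ≤ 2 * ‖ξ‖ := by
  have h1 : |(ξ i).1| ≤ ‖ξ‖ :=
    le_trans (by simpa using norm_fst_le (ξ i)) (norm_le_pi_norm ξ i)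
  have h2 : |(ξ i).2| ≤ ‖ξ‖ :=
    le_trans (by simpa using norm_snd_le (ξ i)) (norm_le_pi_norm ξ i)
  have := abs_le.mp h1
  have := abs_le.mp h2
  linarith

lemma bottleneck_le_const_add_norm {N : ℕ} (𝒟₀ : Multiset (ℝ × ℝ)) (ξ : Fin N → ℝ × ℝ) :
    bottleneck 𝒟₀ ↑(List.ofFn ξ) ≤ (𝒟₀.map fun x => |persHalf x|).sum + 1 * ‖ξ‖ := by
  set c : ℝ := (𝒟₀.map fun x => |persHalf x|).sum with hc
  have hc0 : 0 ≤ c := Multiset.sum_nonneg (by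
    intro x hx
    rcases Multiset.mem_map.mp hx with ⟨y, _, rfl⟩
    exact abs_nonneg _)
  have hmem : max c ‖ξ‖ ∈ {r : ℝ | 0 ≤ r ∧ BottleneckLE 𝒟₀ ↑(List.ofFn ξ) r} := by
    refine ⟨le_max_of_le_left hc0, 0, ?_, ?_, ?_, ?_, ?_⟩
    · simp
    · simp
    · intro p hp; exact absurd hp (Multiset.notMem_zero p)
    · intro x hx
      simp only [Multiset.map_zero, Multiset.sub_zero] at hx
      refine le_trans ?_ (le_max_left c ‖ξ‖)
      refine le_trans (le_abs_self _) ?_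
      exact Multiset.single_le_sum (fun y hy => by
        rcases Multiset.mem_map.mp hy with ⟨z, _, rfl⟩; exact abs_nonneg _)
        _ (Multiset.mem_map_of_mem _ hx)
    · intro y hy
      simp only [Multiset.map_zero, Multiset.sub_zero, Multiset.mem_coe,
        List.mem_ofFn] at hy
      rcases hy with ⟨i, rfl⟩
      refine le_trans ?_ (le_max_right c ‖ξ‖)
      have := pers_le_norm ξ i
      unfold persHalf
      linarith
  have hbdd : BddBelow {r : ℝ | 0 ≤ r ∧ BottleneckLE 𝒟₀ ↑(List.ofFn ξ) r} :=
    ⟨0, fun r hr => hr.1⟩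
  refine le_trans (csInf_le hbdd hmem) ?_
  have := norm_nonneg ξ
  rcases le_total c ‖ξ‖ with h | h <;> simp [max_def, h] <;> linarith


/-- Finiteness of the mean absolute bottleneck deviation: if the local densities
`f N : W^N → ℝ` of a random persistence diagram with `|D| ≤ M` are bounded by `C₂` and
satisfy the decay `f N ξ ≤ C₃ ‖ξ‖^{-2N-2}`, then the expected maximal persistence
`∑_{N=1}^M (1/N!) ∫ max_i (d_i - b_i) f_N` is finite, and for every origin diagram `𝒟₀`
the mean absolute bottleneck deviation
`MAD_f(𝒟₀) = ∑_{N=0}^M (1/N!) ∫ W_∞(𝒟₀, Z) f_N(Z) dZ` is finite. -/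
theorem mad_finite (M : ℕ) (C₂ C₃ : ℝ)
    (f : (N : ℕ) → (Fin N → ℝ × ℝ) → ℝ)
    (hmeas : ∀ N, Measurable (f N))
    (h0 : ∀ N ξ, 0 ≤ f N ξ)
    (hwedge : ∀ N ξ, (¬ ∀ i, 0 ≤ (ξ i).1 ∧ (ξ i).1 < (ξ i).2) → f N ξ = 0)
    (hA1 : ∀ N > M, ∀ ξ, f N ξ = 0)
    (hA2 : ∀ N ξ, f N ξ ≤ C₂)
    (hA3 : ∀ N (ξ : Fin N → ℝ × ℝ), ξ ≠ 0 →
      f N ξ ≤ C₃ * ‖ξ‖ ^ (-(2 * (N : ℝ)) - 2)) :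
    (∑ N ∈ Finset.Icc 1 M, ((N.factorial : ENNReal))⁻¹ *
        ∫⁻ ξ : Fin N → ℝ × ℝ,
          ENNReal.ofReal ((⨆ i : Fin N, ((ξ i).2 - (ξ i).1)) * f N ξ)) < ⊤ ∧
    ∀ 𝒟₀ : Multiset (ℝ × ℝ),
      (∑ N ∈ Finset.range (M + 1), ((N.factorial : ENNReal))⁻¹ *
          ∫⁻ ξ : Fin N → ℝ × ℝ,
            ENNReal.ofReal (bottleneck 𝒟₀ ↑(List.ofFn ξ) * f N ξ)) < ⊤ := by
  constructor
  · refine ENNReal.sum_lt_top.mpr fun N hN => ?_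
    have hN1 : 1 ≤ N := (Finset.mem_Icc.mp hN).1
    haveI : Nonempty (Fin N) := Fin.pos_iff_nonempty.mp (by omega)
    refine ENNReal.mul_lt_top ?_ ?_
    · exact ENNReal.inv_lt_top.mpr (by exact_mod_cast Nat.factorial_pos N)
    · refine aux_lintegral_lt_top N C₂ C₃ (f N) (h0 N) (hA2 N) (hA3 N)
        _ 0 2 le_rfl (by norm_num) fun ξ => ?_
      rw [zero_add]
      exact ciSup_le fun i => pers_le_norm ξ i
  · intro 𝒟₀
    refine ENNReal.sum_lt_top.mpr fun N hN => ?_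
    refine ENNReal.mul_lt_top ?_ ?_
    · exact ENNReal.inv_lt_top.mpr (by exact_mod_cast Nat.factorial_pos N)
    · exact aux_lintegral_lt_top N C₂ C₃ (f N) (h0 N) (hA2 N) (hA3 N)
        _ _ 1 (Multiset.sum_nonneg (by
          intro x hx
          rcases Multiset.mem_map.mp hx with ⟨y, _, rfl⟩
          exact abs_nonneg _)) (by norm_num)
        (fun ξ => bottleneck_le_const_add_norm 𝒟₀ ξ)
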